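/- The polynomial algebra K[x_1,...,x_n] equipped with the Jacobian bracket [a_1,...,a_n] = det(∂_i(a_j)) is an n-Lie algebra, i.e. the Jacobian determinant map is alternating n-linear and satisfies the Filippov identity. -/

import Mathlib

open MvPolynomial

/-- The Jacobian bracket `[a_1,…,a_n] = det (∂a_j/∂x_i)` on `K[x_1,…,x_n]`, `n = m + 1`. -/
noncomputable def jacobianBracket {K : Type*} [CommRing K] (m : ℕ)
    (a : Fin (m + 1) → MvPolynomial (Fin (m + 1)) K) : MvPolynomial (Fin (m + 1)) K :=
  (Matrix.of fun i j => MvPolynomial.pderiv i (a j)).det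

namespace JacobianAux

open Matrix

/-! ### Generalities on derivations and determinants -/

lemma pderiv_pderiv {K : Type*} [CommRing K] {σ : Type*} [DecidableEq σ] (i j : σ)
    (f : MvPolynomial σ K) :
    pderiv i (pderiv j f) = pderiv j (pderiv i f) := by
  induction f using MvPolynomial.induction_on with
  | C a => simp
  | add p q hp hq => simp [hp, hq]
  | mul_X p n ih =>
    have hX : ∀ (u v : σ), pderiv u (pderiv v (X n : MvPolynomial σ K)) = 0 := by
      intro u v
      by_cases h : n = v
      · subst h; simp
      · rw [pderiv_X_of_ne h]; simp
    simp only [pderiv_mul, map_add, pderiv_mul, ih, hX]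
    ring

lemma D_one {R : Type*} [CommRing R] (D : R →+ R)
    (hD : ∀ x y, D (x * y) = x * D y + y * D x) : D 1 = 0 := by
  have := hD 1 1
  simp only [one_mul] at this
  exact left_eq_add.mp this

lemma D_prod {R : Type*} [CommRing R] (D : R →+ R)
    (hD : ∀ x y, D (x * y) = x * D y + y * D x) {ι : Type*} [DecidableEq ι]
    (s : Finset ι) (f : ι → R) :
    D (∏ i ∈ s, f i) = ∑ i ∈ s, (∏ j ∈ s.erase i, f j) * D (f i) := by
  induction s using Finset.induction_on with
  | empty => simpa using D_one D hD
  | insert a s ha ih =>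
    rw [Finset.prod_insert ha, hD, ih, Finset.mul_sum, Finset.sum_insert ha,
      Finset.erase_insert ha, add_comm]
    congr 1
    apply Finset.sum_congr rfl
    intro i hi
    rw [Finset.erase_insert_of_ne (by rintro rfl; exact ha hi),
      Finset.prod_insert (fun h => ha (Finset.mem_of_mem_erase h))]
    ring

/-- A derivation applied to a determinant expands columnwise. -/
lemma deriv_det {R : Type*} [CommRing R] (D : R →+ R)
    (hD : ∀ x y, D (x * y) = x * D y + y * D x) {n : Type*} [DecidableEq n] [Fintype n]
    (M : Matrix n n R) :
    D M.det = ∑ j, (M.updateCol j fun i => D (M i j)).det := by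
  rw [Matrix.det_apply, map_sum]
  have key : ∀ τ : Equiv.Perm n, D (Equiv.Perm.sign τ • ∏ i, M (τ i) i)
      = ∑ j, Equiv.Perm.sign τ • ((∏ i ∈ Finset.univ.erase j, M (τ i) i) * D (M (τ j) j)) := by
    intro τ
    rw [Units.smul_def, map_zsmul, D_prod D hD, Finset.smul_sum]
    simp [Units.smul_def]
  simp_rw [key]
  rw [Finset.sum_comm]
  apply Finset.sum_congr rfl
  intro j _
  rw [Matrix.det_apply]
  apply Finset.sum_congr rfl
  intro τ _
  congr 1
  rw [← Finset.mul_prod_erase Finset.univ _ (Finset.mem_univ j)]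
  rw [Matrix.updateCol_self]
  rw [mul_comm]
  congr 1
  apply Finset.prod_congr rfl
  intro i hi
  rw [Matrix.updateCol_ne (Finset.ne_of_mem_erase hi)]

/-- Cramer-type identity. -/
lemma cramer_sum {R : Type*} [CommRing R] {n : Type*} [DecidableEq n] [Fintype n]
    (M : Matrix n n R) (v : n → R) (k : n) :
    ∑ j, M k j * (M.updateCol j v).det = M.det * v k := by
  have h := congrFun (Matrix.mulVec_cramer M v) k
  simpa [Matrix.mulVec, dotProduct, Matrix.cramer_apply, smul_eq_mul] using h

lemma det_updateCol_sum' {R : Type*} [CommRing R] {n : Type*} [DecidableEq n] [Fintype n]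
    (M : Matrix n n R) (j : n) {ι : Type*} (s : Finset ι) (v : ι → n → R) :
    (M.updateCol j (∑ i ∈ s, v i)).det = ∑ i ∈ s, (M.updateCol j (v i)).det := by
  classical
  induction s using Finset.induction_on with
  | empty =>
    simp only [Finset.sum_empty]
    exact Matrix.det_eq_zero_of_column_eq_zero j (fun i => by simp)
  | insert _ _ ha ih =>
    rw [Finset.sum_insert ha, Matrix.det_updateCol_add, ih, Finset.sum_insert ha]

/-- Pairing a symmetric family against an antisymmetric determinant expression vanishes. -/
lemma sum_det_update_symm {R : Type*} [CommRing R] [IsDomain R] [CharZero R]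
    {n : Type*} [DecidableEq n] [Fintype n]
    (M : Matrix n n R) (p q : n) (hpq : p ≠ q) (H : n → n → R) (hH : ∀ i k, H i k = H k i) :
    ∑ k, ((M.updateCol q (fun i => if i = k then 1 else 0)).updateCol p
      (fun i => H i k)).det = 0 := by
  set e : n → n → R := fun k i => if i = k then 1 else 0 with he
  set G : n → n → R := fun k l => ((M.updateCol q (e k)).updateCol p (e l)).det with hG
  have hdet : ∀ k, ((M.updateCol q (e k)).updateCol p (fun i => H i k)).det
      = ∑ l, H l k * G k l := by
    intro k
    have hcol : (fun i => H i k) = ∑ l, H l k • e l := by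
      funext i
      simp only [Finset.sum_apply, Pi.smul_apply, smul_eq_mul, he]
      rw [Finset.sum_eq_single i] <;> simp +contextual [eq_comm]
    rw [hcol, det_updateCol_sum']
    exact Finset.sum_congr rfl fun l _ => Matrix.det_updateCol_smul _ _ _ _
  have hswap : ∀ k l, G k l = - G l k := by
    intro k l
    have hsub : ((M.updateCol q (e l)).updateCol p (e k)).submatrix id (Equiv.swap p q)
        = (M.updateCol q (e k)).updateCol p (e l) := by
      ext i j
      simp only [Matrix.submatrix_apply, id_eq, Matrix.updateCol_apply]
      rcases eq_or_ne j p with rfl | hjp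
      · simp [Equiv.swap_apply_left, hpq, hpq.symm]
      · rcases eq_or_ne j q with rfl | hjq
        · simp [Equiv.swap_apply_right, hpq, hpq.symm, hjp]
        · simp [Equiv.swap_apply_of_ne_of_ne hjp hjq, hjp, hjq]
    have := Matrix.det_permute' (Equiv.swap p q)
      ((M.updateCol q (e l)).updateCol p (e k))
    rw [hsub, Equiv.Perm.sign_swap hpq] at this
    simp only [hG]
    rw [this]
    push_cast
    ring
  refine (Finset.sum_congr rfl fun k _ => hdet k).trans ?_
  set S := ∑ k, ∑ l, H l k * G k l with hS
  have hneg : S = -S := by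
    calc S = ∑ l, ∑ k, H l k * G k l := Finset.sum_comm
    _ = ∑ k, ∑ l, H l k * (- G k l) := by
        apply Finset.sum_congr rfl
        intro k _
        apply Finset.sum_congr rfl
        intro l _
        rw [hH k l, hswap l k]
    _ = -S := by simp [hS]
  have h2 : (2 : R) * S = 0 := by linear_combination hneg
  rcases mul_eq_zero.mp h2 with h | h
  · exact absurd h two_ne_zero
  · exact h

/-! ### Specifics of the Jacobian bracket -/

variable {K : Type*} [CommRing K] {m : ℕ}

/-- minor obtained by deleting row `i` and the last column -/
noncomputable def jbMinor (a : Fin m → MvPolynomial (Fin (m + 1)) K) (i : Fin (m + 1)) :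
    MvPolynomial (Fin (m + 1)) K :=
  (Matrix.of fun i' j' : Fin m => pderiv (i.succAbove i') (a j')).det

lemma jb_snoc_aux (a : Fin m → MvPolynomial (Fin (m + 1)) K)
    (g : MvPolynomial (Fin (m + 1)) K) :
    jacobianBracket m (Fin.snoc a g) =
      ∑ i : Fin (m + 1), (-1) ^ ((i : ℕ) + m) * pderiv i g * jbMinor a i := by
  rw [jacobianBracket, Matrix.det_succ_column _ (Fin.last m)]
  apply Finset.sum_congr rfl
  intro i _
  rw [Fin.val_last]
  congr 1
  · congr 1
    simp [Fin.snoc_last]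
  · rw [jbMinor]
    congr 1
    ext i' j'
    simp [Matrix.submatrix_apply, Fin.succAbove_last, Fin.snoc_castSucc]

/-- Expansion of the bracket along the last slot. -/
lemma jb_snoc (a : Fin m → MvPolynomial (Fin (m + 1)) K)
    (f : MvPolynomial (Fin (m + 1)) K) :
    jacobianBracket m (Fin.snoc a f) =
      ∑ k, jacobianBracket m (Fin.snoc a (X k)) * pderiv k f := by
  have hX : ∀ k, jacobianBracket m (Fin.snoc a (X k))
      = (-1) ^ ((k : ℕ) + m) * jbMinor a k := by
    intro k
    rw [jb_snoc_aux]
    rw [Finset.sum_eq_single k]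
    · rw [pderiv_X_self]; ring
    · intro i _ hik
      rw [pderiv_X_of_ne (Ne.symm hik)]; ring
    · simp
  rw [jb_snoc_aux]
  simp_rw [hX]
  apply Finset.sum_congr rfl
  intro k _
  ring

lemma hNk (a : Fin m → MvPolynomial (Fin (m + 1)) K) (k : Fin (m + 1)) :
    (Matrix.of fun i j => pderiv i ((Fin.snoc a (X k) : Fin (m+1) → _) j)) =
      (Matrix.of fun i j => pderiv i ((Fin.snoc a 0 : Fin (m+1) → _) j)).updateCol
        (Fin.last m) (fun i => if i = k then 1 else 0) := by
  ext i j
  induction j using Fin.lastCases with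
  | last =>
    simp only [Matrix.updateCol_self, Matrix.of_apply, Fin.snoc_last]
    by_cases h : i = k
    · subst h; simp
    · rw [pderiv_X_of_ne (Ne.symm h), if_neg h]
  | cast j' =>
    rw [Matrix.updateCol_ne (Fin.castSucc_lt_last j').ne]
    simp [Fin.snoc_castSucc]

/-- The Piola identity: the divergence of the cofactor vector vanishes. -/
lemma piola {K : Type*} [Field K] [CharZero K] {m : ℕ}
    (a : Fin m → MvPolynomial (Fin (m + 1)) K) :
    ∑ k, pderiv k (jacobianBracket m (Fin.snoc a (X k))) = 0 := by
  classical
  set N0 : Matrix (Fin (m + 1)) (Fin (m + 1)) (MvPolynomial (Fin (m + 1)) K) :=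
    Matrix.of fun i j => pderiv i ((Fin.snoc a 0 : Fin (m+1) → _) j) with hN0
  have hder : ∀ k : Fin (m + 1), pderiv k (jacobianBracket m (Fin.snoc a (X k)))
      = ∑ j' : Fin m, (Matrix.updateCol
          (N0.updateCol (Fin.last m) (fun i => if i = k then 1 else 0))
          (Fin.castSucc j')
          (fun i => pderiv k (pderiv i (a j')))).det := by
    intro k
    set D : MvPolynomial (Fin (m + 1)) K →+ MvPolynomial (Fin (m + 1)) K :=
      ((pderiv k : Derivation K _ _) :
        MvPolynomial (Fin (m + 1)) K →ₗ[K] MvPolynomial (Fin (m + 1)) K).toAddMonoidHom with hDdef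
    have hDapp : ∀ f, D f = pderiv k f := fun f => rfl
    have hD : ∀ x y, D (x * y) = x * D y + y * D x := by
      intro x y
      simp only [hDapp, pderiv_mul]
      ring
    have h0 : pderiv k (jacobianBracket m (Fin.snoc a (X k)))
        = D ((N0.updateCol (Fin.last m) (fun i => if i = k then 1 else 0)).det) := by
      rw [hDapp, jacobianBracket, hNk a k, hN0]
    rw [h0, deriv_det D hD, Fin.sum_univ_castSucc]
    have hlast : ((N0.updateCol (Fin.last m) (fun i => if i = k then 1 else 0)).updateCol
        (Fin.last m) (fun i => D ((N0.updateCol (Fin.last m)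
          (fun i => if i = k then 1 else 0)) i (Fin.last m)))).det = 0 := by
      apply Matrix.det_eq_zero_of_column_eq_zero (Fin.last m)
      intro i
      rw [Matrix.updateCol_self]
      rw [Matrix.updateCol_self]
      by_cases h : i = k <;> simp [h, hDapp]
    rw [hlast, add_zero]
    apply Finset.sum_congr rfl
    intro j' _
    have hcoleq : (fun i => D ((N0.updateCol (Fin.last m)
        (fun i => if i = k then 1 else 0)) i (Fin.castSucc j')))
        = (fun i => pderiv k (pderiv i (a j'))) := by
      funext i
      rw [hDapp]
      congr 1
      rw [Matrix.updateCol_ne (Fin.castSucc_lt_last j').ne, hN0]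
      simp [Fin.snoc_castSucc]
    rw [hcoleq]
  simp_rw [hder]
  rw [Finset.sum_comm]
  apply Finset.sum_eq_zero
  intro j' _
  have := sum_det_update_symm N0 (Fin.castSucc j') (Fin.last m)
    (Fin.castSucc_lt_last j').ne (fun i k => pderiv k (pderiv i (a j')))
    (fun i k => pderiv_pderiv k i (a j'))
  simpa using this

/-- Brackets with an updated slot as a determinant with an updated column. -/
lemma jb_update (a : Fin (m + 1) → MvPolynomial (Fin (m + 1)) K) (i : Fin (m + 1))
    (g : MvPolynomial (Fin (m + 1)) K) :
    jacobianBracket m (Function.update a i g) =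
      ((Matrix.of fun r j => pderiv r (a j)).updateCol i (fun r => pderiv r g)).det := by
  rw [jacobianBracket]
  congr 1
  ext r j
  rw [Matrix.updateCol_apply]
  by_cases h : j = i
  · subst h; simp
  · simp [Function.update_apply, h]

end JacobianAux

open JacobianAux Matrix

set_option maxHeartbeats 1000000 in
/-- The polynomial algebra `K[x_1,…,x_n]` (char `K = 0`, `n = m + 1`)
equipped with the Jacobian bracket is an `n`-Lie algebra: the Jacobian determinant map is
`n`-linear, alternating, and satisfies the Filippov identity. -/
theorem stmt_3 {K : Type*} [Field K] [CharZero K] (m : ℕ) :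
    (∀ (a : Fin (m + 1) → MvPolynomial (Fin (m + 1)) K) (i : Fin (m + 1)) (c : K)
        (x y : MvPolynomial (Fin (m + 1)) K),
      jacobianBracket m (Function.update a i (c • x + y)) =
        c • jacobianBracket m (Function.update a i x) +
          jacobianBracket m (Function.update a i y)) ∧
    (∀ (a : Fin (m + 1) → MvPolynomial (Fin (m + 1)) K) (i j : Fin (m + 1)),
      i ≠ j → a i = a j → jacobianBracket m a = 0) ∧
    (∀ (a : Fin m → MvPolynomial (Fin (m + 1)) K)
        (b : Fin (m + 1) → MvPolynomial (Fin (m + 1)) K),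
      jacobianBracket m (Fin.snoc a (jacobianBracket m b)) =
        ∑ i : Fin (m + 1),
          jacobianBracket m
            (Function.update b i (jacobianBracket m (Fin.snoc a (b i))))) := by
  refine ⟨?_, ?_, ?_⟩
  · -- multilinearity
    intro a i c x y
    rw [jb_update, jb_update, jb_update]
    have hcol : (fun r : Fin (m + 1) => pderiv r (c • x + y))
        = (MvPolynomial.C c : MvPolynomial (Fin (m + 1)) K) • (fun r => pderiv r x)
          + (fun r => pderiv r y) := by
      funext r
      simp only [map_add, Derivation.map_smul, Pi.add_apply, Pi.smul_apply, smul_eq_mul,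
        MvPolynomial.smul_eq_C_mul, pderiv_C_mul]
    rw [hcol, Matrix.det_updateCol_add, Matrix.det_updateCol_smul,
      MvPolynomial.smul_eq_C_mul]
  · -- alternating
    intro a i j hij hval
    exact Matrix.det_zero_of_column_eq hij (fun k => by simp [hval])
  · -- the Filippov identity
    intro a b
    classical
    set M : Matrix (Fin (m + 1)) (Fin (m + 1)) (MvPolynomial (Fin (m + 1)) K) :=
      Matrix.of fun r j => pderiv r (b j) with hM
    set A : Fin (m + 1) → MvPolynomial (Fin (m + 1)) K :=
      fun k => jacobianBracket m (Fin.snoc a (MvPolynomial.X k)) with hA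
    set Dop : MvPolynomial (Fin (m + 1)) K → MvPolynomial (Fin (m + 1)) K :=
      fun f => ∑ k, A k * pderiv k f with hDop
    have hsnoc : ∀ f, jacobianBracket m (Fin.snoc a f) = Dop f := fun f => jb_snoc a f
    set DopHom : MvPolynomial (Fin (m + 1)) K →+ MvPolynomial (Fin (m + 1)) K :=
      { toFun := Dop
        map_zero' := by simp [hDop]
        map_add' := by
          intro x y
          simp [hDop, map_add, mul_add, Finset.sum_add_distrib] } with hDopHom
    have hDapp : ∀ f, DopHom f = Dop f := fun f => rfl
    have hDopf : ∀ f, Dop f = ∑ k, A k * pderiv k f := fun f => rfl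
    have hLeib : ∀ x y, DopHom (x * y) = x * DopHom y + y * DopHom x := by
      intro x y
      rw [hDapp, hDapp, hDapp, hDopf, hDopf, hDopf, Finset.mul_sum, Finset.mul_sum,
        ← Finset.sum_add_distrib]
      apply Finset.sum_congr rfl
      intro k _
      rw [pderiv_mul]
      ring
    -- commutator of pderiv with Dop
    have hcomm : ∀ (f : MvPolynomial (Fin (m + 1)) K) (r : Fin (m + 1)), pderiv r (Dop f)
        = Dop (pderiv r f) + ∑ k, pderiv r (A k) * pderiv k f := by
      intro f r
      rw [hDopf, hDopf, map_sum, ← Finset.sum_add_distrib]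
      apply Finset.sum_congr rfl
      intro k _
      rw [pderiv_mul, pderiv_pderiv r k f]
      ring
    have hLHS : jacobianBracket m (Fin.snoc a (jacobianBracket m b))
        = ∑ j, (M.updateCol j fun i => DopHom (M i j)).det := by
      have hb : jacobianBracket m b = M.det := rfl
      rw [hsnoc, ← hDapp, hb, deriv_det DopHom hLeib]
    rw [hLHS]
    -- the right-hand side
    have hRHS : ∀ i : Fin (m + 1),
        jacobianBracket m (Function.update b i (jacobianBracket m (Fin.snoc a (b i))))
          = (M.updateCol i fun r => DopHom (M r i)).det
            + ∑ k, pderiv k (b i) * (M.updateCol i fun r => pderiv r (A k)).det := by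
      intro i
      rw [hsnoc, jb_update]
      have hcol : (fun r : Fin (m + 1) => pderiv r (Dop (b i)))
          = (fun r => DopHom (M r i))
            + ∑ k, pderiv k (b i) • (fun r => pderiv r (A k)) := by
        funext r
        simp only [Pi.add_apply, Finset.sum_apply, Pi.smul_apply, smul_eq_mul]
        rw [hcomm (b i) r, hDapp]
        have hMri : M r i = pderiv r (b i) := rfl
        rw [hMri]
        exact congrArg₂ (· + ·) rfl (Finset.sum_congr rfl fun k _ => mul_comm _ _)
      rw [hcol, Matrix.det_updateCol_add, det_updateCol_sum']
      congr 1
      apply Finset.sum_congr rfl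
      intro k _
      rw [Matrix.det_updateCol_smul]
    simp_rw [hRHS]
    rw [Finset.sum_add_distrib]
    have herr : ∑ i, ∑ k, pderiv k (b i) *
        (M.updateCol i fun r => pderiv r (A k)).det = 0 := by
      rw [Finset.sum_comm]
      have hstep : ∀ k : Fin (m + 1), ∑ i, pderiv k (b i) *
          (M.updateCol i fun r => pderiv r (A k)).det
            = M.det * pderiv k (A k) := by
        intro k
        have := cramer_sum M (fun r => pderiv r (A k)) k
        simpa [hM] using this
      simp_rw [hstep]
      rw [← Finset.mul_sum]
      have : ∑ k, pderiv k (A k) = 0 := by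
        simpa [hA] using piola a
      rw [this, mul_zero]
    rw [herr, add_zero]
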